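/- Let k ≥ 1 and let 0 ≤ i ≤ k−1. Every proper 4-coloring of the subgraph of Q_k induced on the vertex set {a_j, b_j, c_j, d_j : 0 ≤ j ≤ i} extends in exactly two ways to a proper 4-coloring of the subgraph of Q_k induced on {a_j, b_j, c_j, d_j : 0 ≤ j ≤ i+1}. -/

import Mathlib

/-- A proper 4-coloring of a simple graph `G`. -/
def IsProperColoring {V : Type*} (G : SimpleGraph V) (f : V → Fin 4) : Prop :=
  ∀ ⦃u v : V⦄, G.Adj u v → f u ≠ f v

/-- `kempeCount G f a b` is the number of `ab`-Kempe chains of `f`, i.e. the number of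
connected components of the subgraph of `G` induced on `f⁻¹({a, b})`. -/
noncomputable def kempeCount {V : Type*} (G : SimpleGraph V) (f : V → Fin 4)
    (a b : Fin 4) : ℕ :=
  Nat.card ((G.induce {v | f v = a ∨ f v = b}).ConnectedComponent)

/-- Tutte's quantity `J_a(f) = p(a,b) + p(a,c) + p(a,d) - p(b,c) - p(b,d) - p(c,d)`,
where `{b, c, d} = Fin 4 \ {a}`. -/
noncomputable def Jcol {V : Type*} (G : SimpleGraph V) (f : V → Fin 4) (a : Fin 4) : ℤ :=
  (∑ x ∈ Finset.univ.erase a, (kempeCount G f a x : ℤ)) -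
    ∑ x ∈ Finset.univ.erase a,
      ∑ y ∈ (Finset.univ.erase a).filter (fun y => x < y), (kempeCount G f x y : ℤ)

/-- The coloring-partition of `f`: the set of its nonempty color classes. -/
def colPart {V : Type*} (f : V → Fin 4) : Set (Set V) :=
  {A | A.Nonempty ∧ ∃ c, A = f ⁻¹' {c}}

/-- `P` is a coloring-partition of `G` if it is the coloring-partition of some proper
4-coloring of `G`. -/
def IsColoringPartition {V : Type*} (G : SimpleGraph V) (P : Set (Set V)) : Prop :=
  ∃ f, IsProperColoring G f ∧ P = colPart f

/-- The set of all color classes of proper 4-colorings of `G`. -/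
def colorClasses {V : Type*} (G : SimpleGraph V) : Set (Set V) :=
  {A | A.Nonempty ∧ ∃ f c, IsProperColoring G f ∧ A = f ⁻¹' {c}}

/-- The 4-coloring complex `B(G)`: vertices are color classes of proper 4-colorings of `G`,
two distinct classes being adjacent iff they are color classes of a common proper
4-coloring. -/
def colorComplex {V : Type*} (G : SimpleGraph V) : SimpleGraph (colorClasses G) :=
  SimpleGraph.fromRel (fun A B => ∃ f, IsProperColoring G f ∧
    (∃ c, (A : Set V) = f ⁻¹' {c}) ∧ (∃ c, (B : Set V) = f ⁻¹' {c}))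

/-- Two proper 4-colorings are adjacent if they have a common (nonempty) color class. -/
def ColAdj {V : Type*} (G : SimpleGraph V) (f g : V → Fin 4) : Prop :=
  IsProperColoring G f ∧ IsProperColoring G g ∧
    ∃ c c', (f ⁻¹' {c}).Nonempty ∧ f ⁻¹' {c} = g ⁻¹' {c'}

/-- Generating relation for the triangulation `Q_k`.  The vertex `(i, 0)` is `a_i`,
`(i, 1)` is `b_i`, `(i, 2)` is `c_i` and `(i, 3)` is `d_i`.  Edges: the 4-cycles
`a_i b_i c_i d_i`, connecting edges between consecutive cycles, and the chords
`a_0 c_0` and `a_{k+1} c_{k+1}`. -/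
def qkRel (k : ℕ) (u v : Fin (k + 2) × Fin 4) : Prop :=
  (u.1 = v.1 ∧ v.2 = u.2 + 1) ∨
  ((v.1 : ℕ) = (u.1 : ℕ) + 1 ∧ (v.2 = u.2 ∨ v.2 = u.2 + 1)) ∨
  ((u.1 : ℕ) = 0 ∧ (v.1 : ℕ) = 0 ∧ u.2 = 0 ∧ v.2 = 2) ∨
  ((u.1 : ℕ) = k + 1 ∧ (v.1 : ℕ) = k + 1 ∧ u.2 = 0 ∧ v.2 = 2)

/-- The triangulation `Q_k`. -/
def Qk (k : ℕ) : SimpleGraph (Fin (k + 2) × Fin 4) := SimpleGraph.fromRel (qkRel k)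

/-- For `1 ≤ k` and `i + 1 ≤ k`, every proper 4-coloring of the subgraph of `Q_k`
induced on the first `i + 1` nested 4-cycles extends in exactly two ways to a proper
4-coloring of the subgraph induced on the first `i + 2` nested 4-cycles. -/
def CondX (F t : Fin 4 → Fin 4) : Prop :=
  ∀ j : Fin 4, t j ≠ t (j + 1) ∧ t j ≠ F j ∧ t (j + 1) ≠ F j

instance (F t : Fin 4 → Fin 4) : Decidable (CondX F t) := by
  unfold CondX; infer_instance

def condbX (A B C D : Fin 4) (q : Fin 4 × Fin 4 × Fin 4 × Fin 4) : Bool :=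
  q.1 != q.2.1 && q.2.1 != q.2.2.1 && q.2.2.1 != q.2.2.2 && q.2.2.2 != q.1 &&
  q.1 != A && q.2.1 != B && q.2.2.1 != C && q.2.2.2 != D &&
  q.2.1 != A && q.2.2.1 != B && q.2.2.2 != C && q.1 != D

lemma condbX_card : ∀ A B C D : Fin 4, A ≠ B → B ≠ C → C ≠ D → D ≠ A →
    (Finset.univ.filter (fun q => condbX A B C D q)).card = 2 := by decide

lemma condX_iff (F t : Fin 4 → Fin 4) :
    CondX F t ↔ condbX (F 0) (F 1) (F 2) (F 3) (t 0, t 1, t 2, t 3) := by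
  constructor
  · intro h
    have h0 := h 0; have h1 := h 1; have h2 := h 2; have h3 := h 3
    simp only [Fin.isValue, show (0:Fin 4)+1 = 1 by decide, show (1:Fin 4)+1 = 2 by decide,
      show (2:Fin 4)+1 = 3 by decide, show (3:Fin 4)+1 = 0 by decide] at h0 h1 h2 h3
    simp only [condbX, Bool.and_eq_true, bne_iff_ne, ne_eq]
    tauto
  · intro h j
    simp only [condbX, Bool.and_eq_true, bne_iff_ne, ne_eq] at h
    fin_cases j <;>
      simp only [Fin.isValue, show (0:Fin 4)+1 = 1 by decide, show (1:Fin 4)+1 = 2 by decide,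
        show (2:Fin 4)+1 = 3 by decide, show (3:Fin 4)+1 = 0 by decide] <;> tauto

lemma condX_card (F : Fin 4 → Fin 4) (hF : ∀ j : Fin 4, F j ≠ F (j + 1)) :
    Nat.card {t : Fin 4 → Fin 4 // CondX F t} = 2 := by
  rw [Nat.card_eq_fintype_card]
  have e : {t : Fin 4 → Fin 4 // CondX F t} ≃
      {q : Fin 4 × Fin 4 × Fin 4 × Fin 4 // condbX (F 0) (F 1) (F 2) (F 3) q} :=
    { toFun := fun t => ⟨(t.1 0, t.1 1, t.1 2, t.1 3), (condX_iff F t.1).1 t.2⟩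
      invFun := fun q => ⟨![q.1.1, q.1.2.1, q.1.2.2.1, q.1.2.2.2], by
        rw [condX_iff]; exact q.2⟩
      left_inv := by
        rintro ⟨t, ht⟩
        ext j
        fin_cases j <;> rfl
      right_inv := by rintro ⟨⟨a, b, c, d⟩, hq⟩; rfl }
  rw [Fintype.card_congr e, Fintype.card_subtype]
  have h30 : F 3 ≠ F 0 := by have := hF 3; simpa using this
  exact condbX_card (F 0) (F 1) (F 2) (F 3) (hF 0) (by simpa using hF 1) (by simpa using hF 2) h30

theorem Qk_extension_count (k i : ℕ) (hk : 1 ≤ k) (hi : i + 1 ≤ k)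
    (f : {v : Fin (k + 2) × Fin 4 | (v.1 : ℕ) ≤ i} → Fin 4)
    (hf : IsProperColoring ((Qk k).induce {v | (v.1 : ℕ) ≤ i}) f) :
    Nat.card {g : {v : Fin (k + 2) × Fin 4 | (v.1 : ℕ) ≤ i + 1} → Fin 4 //
      IsProperColoring ((Qk k).induce {v | (v.1 : ℕ) ≤ i + 1}) g ∧
      ∀ (v : Fin (k + 2) × Fin 4) (hv : (v.1 : ℕ) ≤ i),
        g ⟨v, Nat.le_succ_of_le hv⟩ = f ⟨v, hv⟩} = 2 := by
  have hik : i < k + 2 := by omega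
  have hik1 : i + 1 < k + 2 := by omega
  set F : Fin 4 → Fin 4 := fun j => f ⟨(⟨i, hik⟩, j), le_refl i⟩ with hFdef
  have adj_of : ∀ u v : Fin (k + 2) × Fin 4, u ≠ v → qkRel k u v → (Qk k).Adj u v :=
    fun u v h h' => ⟨h, Or.inl h'⟩
  have hFcyc : ∀ j : Fin 4, F j ≠ F (j + 1) := by
    intro j
    have hne : ((⟨i, hik⟩ : Fin (k + 2)), j) ≠ ((⟨i, hik⟩ : Fin (k + 2)), j + 1) := by
      intro h
      have h2 : j = j + 1 := congrArg Prod.snd h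
      revert h2; fin_cases j <;> decide
    exact hf (u := ⟨(⟨i, hik⟩, j), le_refl i⟩) (v := ⟨(⟨i, hik⟩, j + 1), le_refl i⟩)
      (adj_of _ _ hne (Or.inl ⟨rfl, rfl⟩))
  have key : Nat.card {g : {v : Fin (k + 2) × Fin 4 | (v.1 : ℕ) ≤ i + 1} → Fin 4 //
      IsProperColoring ((Qk k).induce {v | (v.1 : ℕ) ≤ i + 1}) g ∧
      ∀ (v : Fin (k + 2) × Fin 4) (hv : (v.1 : ℕ) ≤ i),
        g ⟨v, Nat.le_succ_of_le hv⟩ = f ⟨v, hv⟩} =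
      Nat.card {t : Fin 4 → Fin 4 // CondX F t} := by
    apply Nat.card_congr
    refine
      { toFun := fun g => ⟨fun j => g.1 ⟨(⟨i + 1, hik1⟩, j), le_refl (i+1)⟩, ?_⟩
        invFun := fun t => ⟨fun v =>
          if h : ((v : Fin (k + 2) × Fin 4).1 : ℕ) ≤ i then f ⟨v, h⟩
          else t.1 (v : Fin (k + 2) × Fin 4).2, ?_, ?_⟩
        left_inv := ?_
        right_inv := ?_ }
    · -- forward: coloring gives CondX
      obtain ⟨g, hg, hext⟩ := g
      intro j
      have hrow : ∀ j : Fin 4,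
          g ⟨(⟨i, hik⟩, j), Nat.le_succ_of_le (le_refl i)⟩ = F j :=
        fun j => hext (⟨i, hik⟩, j) (le_refl i)
      have hne_row : ((⟨i, hik⟩ : Fin (k+2)), j) ≠ ((⟨i + 1, hik1⟩ : Fin (k+2)), j) := by
        intro h
        have := congrArg (fun x => ((x.1 : Fin (k+2)) : ℕ)) h
        simp at this
      refine ⟨?_, ?_, ?_⟩
      · apply hg (u := ⟨(⟨i + 1, hik1⟩, j), le_refl (i+1)⟩)
          (v := ⟨(⟨i + 1, hik1⟩, j + 1), le_refl (i+1)⟩)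
        refine adj_of _ _ ?_ (Or.inl ⟨rfl, rfl⟩)
        intro h
        have h2 : j = j + 1 := congrArg Prod.snd h
        revert h2; fin_cases j <;> decide
      · have := hg (u := ⟨(⟨i, hik⟩, j), Nat.le_succ_of_le (le_refl i)⟩)
          (v := ⟨(⟨i + 1, hik1⟩, j), le_refl (i+1)⟩)
          (adj_of _ _ hne_row (Or.inr (Or.inl ⟨by simp, Or.inl rfl⟩)))
        rw [hrow j] at this
        exact fun h => this h.symm
      · have hne' : ((⟨i, hik⟩ : Fin (k+2)), j) ≠ ((⟨i + 1, hik1⟩ : Fin (k+2)), j + 1) := by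
          intro h
          have := congrArg (fun x => ((x.1 : Fin (k+2)) : ℕ)) h
          simp at this
        have := hg (u := ⟨(⟨i, hik⟩, j), Nat.le_succ_of_le (le_refl i)⟩)
          (v := ⟨(⟨i + 1, hik1⟩, j + 1), le_refl (i+1)⟩)
          (adj_of _ _ hne' (Or.inr (Or.inl ⟨by simp, Or.inr rfl⟩)))
        rw [hrow j] at this
        exact fun h => this h.symm
    · -- backward: extension is proper
      rintro ⟨u, hu⟩ ⟨v, hv⟩ hadj
      have hadj' : (Qk k).Adj u v := hadj
      rw [Qk, SimpleGraph.fromRel_adj] at hadj'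
      obtain ⟨hne, hrel⟩ := hadj'
      have hu2 : (u.1 : ℕ) ≤ i + 1 := hu
      have hv2 : (v.1 : ℕ) ≤ i + 1 := hv
      by_cases hu' : (u.1 : ℕ) ≤ i <;> by_cases hv' : (v.1 : ℕ) ≤ i
      · simp only [dif_pos hu', dif_pos hv']
        exact hf (u := ⟨u, hu'⟩) (v := ⟨v, hv'⟩) ⟨hne, hrel⟩
      · -- u low, v top row
        simp only [dif_pos hu', dif_neg hv']
        have hv1 : (v.1 : ℕ) = i + 1 := by omega
        obtain ⟨u1, u2⟩ := u
        obtain ⟨v1, v2⟩ := v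
        rcases hrel with h | h
        · rcases h with ⟨h1, -⟩ | ⟨h1, h2⟩ | ⟨h1, h2, -⟩ | ⟨h1, -⟩
          · exact absurd (congrArg Fin.val h1) (by simp at hv1 hu' ⊢; omega)
          · have hu1 : (u1 : ℕ) = i := by simp at hv1 h1 ⊢; omega
            have he : u1 = ⟨i, hik⟩ := Fin.ext hu1
            subst he
            rcases h2 with h2 | h2 <;> rw [h2]
            · exact fun h => (t.2 u2).2.1 h.symm
            · exact fun h => (t.2 u2).2.2 h.symm
          · dsimp only at hv1 h2; omega
          · simp at hu' h1; omega
        · rcases h with ⟨h1, -⟩ | ⟨h1, -⟩ | ⟨h1, h2, -⟩ | ⟨h1, h2, -⟩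
          · exact absurd (congrArg Fin.val h1) (by simp at hv1 hu' ⊢; omega)
          · simp at h1 hu' hv1; omega
          · dsimp only at h1 hv1; omega
          · simp at h1 hu'; omega
      · -- u top row, v low
        simp only [dif_neg hu', dif_pos hv']
        have hu1 : (u.1 : ℕ) = i + 1 := by omega
        obtain ⟨u1, u2⟩ := u
        obtain ⟨v1, v2⟩ := v
        rcases hrel with h | h
        · rcases h with ⟨h1, -⟩ | ⟨h1, -⟩ | ⟨h1, h2, -⟩ | ⟨h1, h2, -⟩
          · exact absurd (congrArg Fin.val h1) (by simp at hu1 hv' ⊢; omega)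
          · simp at h1 hu1 hv'; omega
          · dsimp only at h1 hu1; omega
          · simp at h2 hv'; omega
        · rcases h with ⟨h1, -⟩ | ⟨h1, h2⟩ | ⟨h1, h2, -⟩ | ⟨h1, -⟩
          · exact absurd (congrArg Fin.val h1) (by simp at hu1 hv' ⊢; omega)
          · have hv1 : (v1 : ℕ) = i := by simp at hu1 h1 ⊢; omega
            have he : v1 = ⟨i, hik⟩ := Fin.ext hv1
            subst he
            rcases h2 with h2 | h2 <;> rw [h2]
            · exact (t.2 v2).2.1
            · exact (t.2 v2).2.2
          · dsimp only at h2 hu1; omega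
          · simp at h1 hv'; omega
      · -- both top row
        simp only [dif_neg hu', dif_neg hv']
        have hu1 : (u.1 : ℕ) = i + 1 := by omega
        have hv1 : (v.1 : ℕ) = i + 1 := by omega
        obtain ⟨u1, u2⟩ := u
        obtain ⟨v1, v2⟩ := v
        rcases hrel with h | h
        · rcases h with ⟨-, h2⟩ | ⟨h1, -⟩ | ⟨h1, h2, -⟩ | ⟨h1, -⟩
          · rw [h2]; exact (t.2 u2).1
          · simp at h1 hu1 hv1; omega
          · simp at h1 hu1; omega
          · simp at h1 hu1; omega
        · rcases h with ⟨-, h2⟩ | ⟨h1, -⟩ | ⟨h1, h2, -⟩ | ⟨h1, -⟩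
          · rw [h2]; exact (t.2 v2).1.symm
          · simp at h1 hu1 hv1; omega
          · simp at h1 hv1; omega
          · simp at h1 hv1; omega
    · -- extension property
      intro v hv
      exact dif_pos hv
    · -- left inverse
      rintro ⟨g, hg, hext⟩
      apply Subtype.ext
      funext ⟨⟨v1, v2⟩, hv⟩
      by_cases h : ((v1 : ℕ)) ≤ i
      · simp only [dif_pos h]
        exact (hext (v1, v2) h).symm
      · simp only [dif_neg h]
        have hv2 : (v1 : ℕ) ≤ i + 1 := hv
        have hv1 : (v1 : ℕ) = i + 1 := by omega
        have he : v1 = ⟨i + 1, hik1⟩ := Fin.ext hv1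
        subst he
        rfl
    · -- right inverse
      rintro ⟨t, ht⟩
      apply Subtype.ext
      funext j
      simp only [dif_neg (Nat.not_succ_le_self i)]
  rw [key]
  exact condX_card F hFcyc
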